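/- Let G be a graph on n vertices with a vertex partition {X,Y} such that every component of G[X] and of G[Y] has at most k vertices, where k ≥ 1. If m denotes the number of edges of G, then m ≤ n²/4 + (a_X + a_Y)n/4 + (k-1)²/16, where a_X and a_Y are the average degrees of G[X] and G[Y] respectively. -/

import Mathlib

open Finset SimpleGraph

open Finset SimpleGraph

lemma aux_deg {V : Type*} [Fintype V] [DecidableEq V] (G : SimpleGraph V)
    [DecidableRel G.Adj] (k : ℕ) (X : Finset V)
    (hX : ∀ x : ↥(X : Set V),
      {y : ↥(X : Set V) | (G.induce (X : Set V)).Reachable x y}.ncard ≤ k) :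
    2 * (G.edgeFinset.filter (fun e => ∀ v ∈ e, v ∈ X)).card + X.card ≤ k * X.card := by
  classical
  let G' : SimpleGraph V := ⟨fun a b => G.Adj a b ∧ a ∈ X ∧ b ∈ X,
    ⟨fun a b h => ⟨h.1.symm, h.2.2, h.2.1⟩⟩, ⟨fun a h => G.irrefl h.1⟩⟩
  haveI hdec : DecidableRel G'.Adj := fun a b => instDecidableAnd
  have hedge : G'.edgeFinset = G.edgeFinset.filter (fun e => ∀ v ∈ e, v ∈ X) := by
    ext e
    induction e with
    | _ a b =>
      simp only [SimpleGraph.mem_edgeFinset, Finset.mem_filter, SimpleGraph.mem_edgeSet,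
        Sym2.mem_iff]
      show (G.Adj a b ∧ a ∈ X ∧ b ∈ X) ↔ _
      constructor
      · rintro ⟨h1, h2, h3⟩
        exact ⟨h1, fun v hv => by rcases hv with rfl | rfl <;> assumption⟩
      · rintro ⟨h1, h2⟩
        exact ⟨h1, h2 a (Or.inl rfl), h2 b (Or.inr rfl)⟩
  have hdegle : ∀ v ∈ X, G'.degree v + 1 ≤ k := by
    intro v hv
    have hv' : v ∈ (X : Set V) := hv
    set v0 : ↥(X : Set V) := ⟨v, hv'⟩ with hv0
    set N : Finset ↥(X : Set V) := Finset.univ.filter (fun w => G.Adj v w.1) with hN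
    have h1 : G'.degree v ≤ N.card := by
      have himg : G'.neighborFinset v = N.image Subtype.val := by
        ext w
        simp only [SimpleGraph.mem_neighborFinset, Finset.mem_image, hN, Finset.mem_filter,
          Finset.mem_univ, true_and]
        constructor
        · rintro ⟨hadj, _, hwX⟩
          exact ⟨⟨w, hwX⟩, hadj, rfl⟩
        · rintro ⟨u, hadj, rfl⟩
          exact ⟨hadj, hv, u.2⟩
      rw [SimpleGraph.degree, himg]
      exact Finset.card_image_le
    have h2 : N.card + 1 ≤ k := by
      have hins : ((insert v0 N : Finset _) : Set _) ⊆
          {y : ↥(X : Set V) | (G.induce (X : Set V)).Reachable v0 y} := by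
        intro w hw
        simp only [Finset.coe_insert, Set.mem_insert_iff, Finset.mem_coe, hN,
          Finset.mem_filter] at hw
        rcases hw with rfl | ⟨_, hadj⟩
        · exact SimpleGraph.Reachable.refl _
        · exact SimpleGraph.Adj.reachable (by simpa using hadj)
      have hcard := Set.ncard_le_ncard hins (Set.toFinite _)
      rw [Set.ncard_coe_finset] at hcard
      have hnot : v0 ∉ N := by simp [hN, hv0]
      rw [Finset.card_insert_of_notMem hnot] at hcard
      exact hcard.trans (hX v0)
    omega
  have hdeg0 : ∀ v ∉ X, G'.degree v = 0 := by
    intro v hv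
    rw [SimpleGraph.degree, Finset.card_eq_zero, Finset.eq_empty_iff_forall_notMem]
    intro w hw
    rw [SimpleGraph.mem_neighborFinset] at hw
    exact hv hw.2.1
  have hsum := SimpleGraph.sum_degrees_eq_twice_card_edges G'
  rw [hedge] at hsum
  have hle : ∑ v ∈ X, (G'.degree v + 1) ≤ ∑ v ∈ X, k := Finset.sum_le_sum hdegle
  rw [Finset.sum_add_distrib, Finset.sum_const, smul_eq_mul, mul_one, Finset.sum_const,
    smul_eq_mul, Nat.mul_comm] at hle
  have hsumX : ∑ v ∈ X, G'.degree v = ∑ v, G'.degree v := by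
    apply Finset.sum_subset (Finset.subset_univ X)
    intro v _ hv; exact hdeg0 v hv
  omega


lemma sym2_mk_out {V : Type*} (e : Sym2 V) : Sym2.mk (Quot.out e).1 (Quot.out e).2 = e := by
  exact Quot.out_eq e

lemma sym2_mk_f {V : Type*} [DecidableEq V] (X : Finset V) (e : Sym2 V) :
    Quot.mk (Sym2.Rel V) (if (Quot.out e).1 ∈ X then Quot.out e else (Quot.out e).swap) = e := by
  split
  · exact sym2_mk_out e
  · rw [show (Quot.out e).swap = ((Quot.out e).2, (Quot.out e).1) from rfl]
    exact Sym2.eq_swap.trans (sym2_mk_out e)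

lemma aux_cross {V : Type*} [Fintype V] [DecidableEq V] (G : SimpleGraph V)
    [DecidableRel G.Adj] (X Y : Finset V) (hdisj : Disjoint X Y)
    (hcover : X ∪ Y = Finset.univ) :
    (G.edgeFinset.filter
      (fun e => ¬ (∀ v ∈ e, v ∈ X) ∧ ¬ (∀ v ∈ e, v ∈ Y))).card ≤ X.card * Y.card := by
  classical
  rw [← Finset.card_product]
  apply Finset.card_le_card_of_injOn
    (fun e => if (Quot.out e).1 ∈ X then Quot.out e else (Quot.out e).swap)
  · intro e he
    simp only [Finset.mem_coe, Finset.mem_filter] at he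
    obtain ⟨hee, hnX, hnY⟩ := he
    set a := (Quot.out e).1 with ha
    set b := (Quot.out e).2 with hb
    have hmk : Sym2.mk a b = e := sym2_mk_out e
    rw [← hmk] at hnX hnY
    have hmema : a ∈ X ∨ a ∈ Y := by
      have : a ∈ X ∪ Y := hcover ▸ Finset.mem_univ a
      simpa [Finset.mem_union] using this
    have hmemb : b ∈ X ∨ b ∈ Y := by
      have : b ∈ X ∪ Y := hcover ▸ Finset.mem_univ b
      simpa [Finset.mem_union] using this
    have hnX' : ¬ (a ∈ X ∧ b ∈ X) := fun h => hnX (fun v hv => by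
      rcases Sym2.mem_iff.mp hv with rfl | rfl
      exacts [h.1, h.2])
    have hnY' : ¬ (a ∈ Y ∧ b ∈ Y) := fun h => hnY (fun v hv => by
      rcases Sym2.mem_iff.mp hv with rfl | rfl
      exacts [h.1, h.2])
    have hab : (a ∈ X ∧ b ∈ Y) ∨ (b ∈ X ∧ a ∈ Y) := by tauto
    simp only [Finset.mem_coe, Finset.mem_product]
    rcases hab with ⟨haX, hbY⟩ | ⟨hbX, haY⟩
    · rw [if_pos haX]
      exact ⟨haX, hbY⟩
    · have haX : a ∉ X := fun h => (Finset.disjoint_left.mp hdisj h) haY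
      rw [if_neg haX]
      exact ⟨hbX, haY⟩
  · intro e1 _ e2 _ heq
    have := congrArg (Quot.mk (Sym2.Rel V)) heq
    rwa [sym2_mk_f, sym2_mk_f] at this


lemma aux_split {V : Type*} [Fintype V] [DecidableEq V] (G : SimpleGraph V)
    [DecidableRel G.Adj] (X Y : Finset V) (hdisj : Disjoint X Y) :
    G.edgeFinset.card =
      (G.edgeFinset.filter (fun e => ∀ v ∈ e, v ∈ X)).card
      + (G.edgeFinset.filter (fun e => ∀ v ∈ e, v ∈ Y)).card
      + (G.edgeFinset.filter
          (fun e => ¬ (∀ v ∈ e, v ∈ X) ∧ ¬ (∀ v ∈ e, v ∈ Y))).card := by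
  classical
  have h1 := Finset.card_filter_add_card_filter_not
    (s := G.edgeFinset) (p := fun e => ∀ v ∈ e, v ∈ X)
  have h2 := Finset.card_filter_add_card_filter_not
    (s := G.edgeFinset.filter (fun e => ¬ (∀ v ∈ e, v ∈ X)))
    (p := fun e => ∀ v ∈ e, v ∈ Y)
  have h3 : (G.edgeFinset.filter (fun e => ¬ (∀ v ∈ e, v ∈ X))).filter
      (fun e => ∀ v ∈ e, v ∈ Y) = G.edgeFinset.filter (fun e => ∀ v ∈ e, v ∈ Y) := by
    rw [Finset.filter_filter]
    apply Finset.filter_congr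
    intro e _
    induction e with
    | _ a b =>
      constructor
      · exact And.right
      · intro hQ
        refine ⟨fun hP => ?_, hQ⟩
        exact Finset.disjoint_left.mp hdisj (hP a (by simp)) (hQ a (by simp))
  have h4 : (G.edgeFinset.filter (fun e => ¬ (∀ v ∈ e, v ∈ X))).filter
      (fun e => ¬ (∀ v ∈ e, v ∈ Y)) = G.edgeFinset.filter
      (fun e => ¬ (∀ v ∈ e, v ∈ X) ∧ ¬ (∀ v ∈ e, v ∈ Y)) := by
    rw [Finset.filter_filter]
  rw [h3, h4] at h2
  omega

/-- If `{X, Y}` partitions the vertices of `G` and every connected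
component of `G[X]` and of `G[Y]` has at most `k` vertices, then
`m ≤ n²/4 + (a_X + a_Y)n/4 + (k-1)²/16`, where `a_X, a_Y` are the average degrees of
`G[X]` and `G[Y]`. -/
theorem stmt18 {V : Type*} [Fintype V] [DecidableEq V] (G : SimpleGraph V)
    [DecidableRel G.Adj] (k n m : ℕ) (hk : 1 ≤ k)
    (hn : n = Fintype.card V) (hm : m = G.edgeFinset.card)
    (X Y : Finset V) (hdisj : Disjoint X Y) (hcover : X ∪ Y = Finset.univ)
    (hX : ∀ x : ↥(X : Set V),
      {y : ↥(X : Set V) | (G.induce (X : Set V)).Reachable x y}.ncard ≤ k)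
    (hY : ∀ y : ↥(Y : Set V),
      {z : ↥(Y : Set V) | (G.induce (Y : Set V)).Reachable y z}.ncard ≤ k)
    (aX aY : ℝ)
    (haX : aX = 2 * ((G.edgeFinset.filter (fun e => ∀ v ∈ e, v ∈ X)).card : ℝ) / X.card)
    (haY : aY = 2 * ((G.edgeFinset.filter (fun e => ∀ v ∈ e, v ∈ Y)).card : ℝ) / Y.card) :
    (m : ℝ) ≤ (n : ℝ) ^ 2 / 4 + (aX + aY) * n / 4 + ((k : ℝ) - 1) ^ 2 / 16 := by
  classical
  set mX := (G.edgeFinset.filter (fun e => ∀ v ∈ e, v ∈ X)).card with hmX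
  set mY := (G.edgeFinset.filter (fun e => ∀ v ∈ e, v ∈ Y)).card with hmY
  -- edge count split
  have hsplit := aux_split G X Y hdisj
  have hcross := aux_cross G X Y hdisj hcover
  have hmle : (m : ℝ) ≤ (mX : ℝ) + (mY : ℝ) + (X.card : ℝ) * (Y.card : ℝ) := by
    have : m ≤ mX + mY + X.card * Y.card := by omega
    exact_mod_cast this
  -- degree bounds
  have hdx : 2 * mX + X.card ≤ k * X.card := aux_deg G k X hX
  have hdy : 2 * mY + Y.card ≤ k * Y.card := aux_deg G k Y hY
  -- n = |X| + |Y|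
  have hn' : (n : ℝ) = (X.card : ℝ) + (Y.card : ℝ) := by
    have : X.card + Y.card = n := by
      rw [hn, ← Finset.card_univ, ← hcover, Finset.card_union_of_disjoint hdisj]
    exact_mod_cast this.symm
  -- mX = 0 when X empty (and similarly for Y)
  have hempty : ∀ Z : Finset V, Z.card = 0 →
      (G.edgeFinset.filter (fun e => ∀ v ∈ e, v ∈ Z)).card = 0 := by
    intro Z hZ
    rw [Finset.card_eq_zero] at hZ ⊢
    rw [Finset.eq_empty_iff_forall_notMem]
    intro e he
    rw [Finset.mem_filter] at he
    induction e with
    | _ a b =>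
      have := he.2 a (by simp)
      simp [hZ] at this
  have haXx : aX * (X.card : ℝ) = 2 * (mX : ℝ) := by
    by_cases hx : (X.card : ℝ) = 0
    · have : mX = 0 := hempty X (by exact_mod_cast hx)
      rw [hx, this, haX]; ring
    · rw [haX]; field_simp
  have haYy : aY * (Y.card : ℝ) = 2 * (mY : ℝ) := by
    by_cases hy : (Y.card : ℝ) = 0
    · have : mY = 0 := hempty Y (by exact_mod_cast hy)
      rw [hy, this, haY]; ring
    · rw [haY]; field_simp
  -- bounds 0 ≤ aX ≤ k - 1
  have hk1 : (0 : ℝ) ≤ (k : ℝ) - 1 := by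
    have : (1 : ℝ) ≤ (k : ℝ) := by exact_mod_cast hk
    linarith
  have hbound : ∀ (Z : Finset V) (a : ℝ) (mZ : ℕ),
      a * (Z.card : ℝ) = 2 * (mZ : ℝ) → 2 * mZ + Z.card ≤ k * Z.card →
      a = 2 * (mZ : ℝ) / Z.card → 0 ≤ a ∧ a ≤ (k : ℝ) - 1 := by
    intro Z a mZ he hd ha
    by_cases hz : (Z.card : ℝ) = 0
    · have hm0 : (mZ : ℝ) = 0 := by
        rw [hz] at he; linarith
      rw [ha, hz, hm0]
      norm_num
      exact hk
    · have hzpos : (0 : ℝ) < (Z.card : ℝ) := lt_of_le_of_ne (Nat.cast_nonneg _) (Ne.symm hz)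
      have hd' : 2 * (mZ : ℝ) + (Z.card : ℝ) ≤ (k : ℝ) * (Z.card : ℝ) := by
        exact_mod_cast hd
      constructor
      · rw [ha]
        positivity
      · rw [← he] at hd'
        nlinarith
  obtain ⟨haX0, haXk⟩ := hbound X aX mX haXx hdx haX
  obtain ⟨haY0, haYk⟩ := hbound Y aY mY haYy hdy haY
  -- final arithmetic
  rw [hn']
  nlinarith [sq_nonneg (2 * ((X.card : ℝ) - (Y.card : ℝ)) - (aX - aY)),
    mul_nonneg (by linarith : (0:ℝ) ≤ (k:ℝ) - 1 - aX + aY)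
      (by linarith : (0:ℝ) ≤ (k:ℝ) - 1 + aX - aY),
    hmle, haXx, haYy]
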